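/- Let R be a commutative ring and M an R-module. Then M is universally torsionless if and only if M is a flat Mittag-Leffler module and for every maximal ideal 𝔪 ⊂ R the natural map M ⊗_R R/𝔪 → Hom_R(M*, R/𝔪) is injective. -/

import Mathlib

open TensorProduct

/-- The natural map `M ⊗ N → Hom(M*, N)`, `m ⊗ n ↦ (w ↦ w m • n)`. -/
noncomputable def natMap (R : Type*) [CommRing R] (M : Type*) [AddCommGroup M] [Module R M]
    (N : Type*) [AddCommGroup N] [Module R N] :
    M ⊗[R] N →ₗ[R] ((M →ₗ[R] R) →ₗ[R] N) :=
  (dualTensorHom R (Module.Dual R M) N).comp (LinearMap.rTensor N (Module.Dual.eval R M))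

section Aux

variable (R : Type u) [CommRing R] (M : Type v) [AddCommGroup M] [Module R M]

@[simp] lemma natMap_tmul {N : Type w} [AddCommGroup N] [Module R N] (m : M) (n : N)
    (w : M →ₗ[R] R) : natMap R M N (m ⊗ₜ n) w = w m • n := by
  simp [natMap]

/-- `dia K` is the submodule of `Mᵗ` generated by the elements `(aᵢ • μ)ᵢ`
with `a ∈ K` and `μ ∈ M`. -/
def dia {t : ℕ} (K : Submodule R (Fin t → R)) : Submodule R (Fin t → M) :=
  Submodule.span R {z | ∃ a ∈ K, ∃ μ : M, z = fun i => a i • μ}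

/-- Local projectivity of `M`, in equational form. -/
def IsLP : Prop :=
  ∀ (t : ℕ) (K : Submodule R (Fin t → R)) (m : Fin t → M),
    (∀ w : M →ₗ[R] R, (fun i => w (m i)) ∈ K) → m ∈ dia R M K

variable {R M}

lemma natMap_sum {N : Type w} [AddCommGroup N] [Module R N] {t : ℕ}
    (m : Fin t → M) (n : Fin t → N) (w : M →ₗ[R] R) :
    natMap R M N (∑ i, m i ⊗ₜ n i) w = ∑ i, w (m i) • n i := by
  rw [map_sum, LinearMap.sum_apply]
  simp

/-- Naturality of `natMap` in the second variable. -/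
lemma natMap_lTensor {N : Type w} [AddCommGroup N] [Module R N]
    {N' : Type w'} [AddCommGroup N'] [Module R N'] (f : N →ₗ[R] N')
    (z : M ⊗[R] N) (w : M →ₗ[R] R) :
    natMap R M N' (LinearMap.lTensor M f z) w = f (natMap R M N z w) := by
  induction z using TensorProduct.induction_on with
  | zero => simp
  | tmul m n => simp
  | add a b ha hb => simp [ha, hb]

lemma piRightHom_eq_lTensor_proj {g : Type w} (Q : g → Type w')
    [∀ i, AddCommGroup (Q i)] [∀ i, Module R (Q i)] (z : M ⊗[R] (∀ i, Q i)) (i : g) :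
    piRightHom R R M Q z i = LinearMap.lTensor M (LinearMap.proj i) z := by
  induction z using TensorProduct.induction_on with
  | zero => simp
  | tmul m q => simp
  | add a b ha hb => simp [ha, hb]

/-- Local projectivity implies injectivity of `natMap` into any module, in any universe. -/
lemma injective_natMap_of_isLP (h : IsLP R M) {N : Type w} [AddCommGroup N] [Module R N] :
    Function.Injective (natMap R M N) := by
  rw [injective_iff_map_eq_zero]
  intro x hx
  classical
  obtain ⟨S, rfl⟩ := TensorProduct.exists_finset x
  set t := S.card with ht
  set e := S.equivFin with he
  set m : Fin t → M := fun j => ((e.symm j) : M × N).1 with hm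
  set n : Fin t → N := fun j => ((e.symm j) : M × N).2 with hn
  have hxeq : (∑ p ∈ S, p.1 ⊗ₜ[R] p.2) = ∑ j : Fin t, m j ⊗ₜ[R] n j := by
    rw [← Finset.sum_attach S (fun p => p.1 ⊗ₜ[R] p.2)]
    exact (Equiv.sum_comp e.symm (fun p => (p : M × N).1 ⊗ₜ[R] (p : M × N).2)).symm
  rw [hxeq] at hx ⊢
  set Φ : (Fin t → R) →ₗ[R] N := ∑ j, LinearMap.smulRight (LinearMap.proj j) (n j) with hΦ
  have hΦapp : ∀ b : Fin t → R, Φ b = ∑ j, b j • n j := by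
    intro b; rw [hΦ]; simp
  set K := LinearMap.ker Φ with hK
  have hmem : ∀ w : M →ₗ[R] R, (fun i => w (m i)) ∈ K := by
    intro w
    rw [hK, LinearMap.mem_ker, hΦapp]
    have := congrArg (fun f => f w) hx
    simpa [natMap_sum] using this
  have hdia := h t K m hmem
  set Ψ : (Fin t → M) →ₗ[R] M ⊗[R] N :=
    ∑ j, ((TensorProduct.mk R M N).flip (n j)).comp (LinearMap.proj j) with hΨ
  have hΨapp : ∀ z : Fin t → M, Ψ z = ∑ j, z j ⊗ₜ[R] n j := by
    intro z; rw [hΨ]; simp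
  have hkill : dia R M K ≤ LinearMap.ker Ψ := by
    rw [dia, Submodule.span_le]
    rintro z ⟨a, haK, μ, rfl⟩
    rw [SetLike.mem_coe, LinearMap.mem_ker, hΨapp]
    have : ∑ j, (a j • μ) ⊗ₜ[R] n j = μ ⊗ₜ[R] Φ a := by
      rw [hΦapp, tmul_sum]
      congr 1
      ext j
      rw [smul_tmul, tmul_smul]
    rw [this, LinearMap.mem_ker.mp haK, tmul_zero]
  have : Ψ m = 0 := hkill hdia
  rw [hΨapp] at this
  exact this

/-- Local projectivity implies flatness. -/
lemma flat_of_isLP (h : IsLP R M) : Module.Flat R M := by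
  rw [Module.Flat.iff_lift_lsmul_comp_subtype_injective]
  intro I _
  rw [injective_iff_map_eq_zero]
  intro z hz
  classical
  obtain ⟨S, rfl⟩ := TensorProduct.exists_finset z
  set t := S.card with ht
  set e := S.equivFin with he
  set a : Fin t → I := fun j => ((e.symm j) : I × M).1 with ha
  set m : Fin t → M := fun j => ((e.symm j) : I × M).2 with hm
  have hxeq : (∑ p ∈ S, p.1 ⊗ₜ[R] p.2) = ∑ j : Fin t, a j ⊗ₜ[R] m j := by
    rw [← Finset.sum_attach S (fun p => p.1 ⊗ₜ[R] p.2)]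
    exact (Equiv.sum_comp e.symm (fun p => (p : I × M).1 ⊗ₜ[R] (p : I × M).2)).symm
  rw [hxeq] at hz ⊢
  set Φ : (Fin t → R) →ₗ[R] R := ∑ j, LinearMap.smulRight (LinearMap.proj j) ((a j : R)) with hΦ
  have hΦapp : ∀ b : Fin t → R, Φ b = ∑ j, b j • (a j : R) := by
    intro b; rw [hΦ]; simp
  set K := LinearMap.ker Φ with hK
  have hrel : (∑ j, (a j : R) • m j) = 0 := by
    have := hz
    rw [map_sum] at this
    simpa [TensorProduct.lift.tmul] using this
  have hmem : ∀ w : M →ₗ[R] R, (fun i => w (m i)) ∈ K := by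
    intro w
    rw [hK, LinearMap.mem_ker, hΦapp]
    calc (∑ j, w (m j) • (a j : R)) = w (∑ j, (a j : R) • m j) := by
          rw [map_sum]; congr 1; ext j; rw [map_smul, smul_eq_mul, smul_eq_mul, mul_comm]
    _ = 0 := by rw [hrel, map_zero]
  have hdia := h t K m hmem
  set Ψ : (Fin t → M) →ₗ[R] (I ⊗[R] M) :=
    ∑ j, (TensorProduct.mk R I M (a j)).comp (LinearMap.proj j) with hΨ
  have hΨapp : ∀ z : Fin t → M, Ψ z = ∑ j, a j ⊗ₜ[R] z j := by
    intro z; rw [hΨ]; simp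
  have hkill : dia R M K ≤ LinearMap.ker Ψ := by
    rw [dia, Submodule.span_le]
    rintro z ⟨c, hcK, μ, rfl⟩
    rw [SetLike.mem_coe, LinearMap.mem_ker, hΨapp]
    have h1 : ∀ j, a j ⊗ₜ[R] (c j • μ) = (c j • a j) ⊗ₜ[R] μ := by
      intro j; exact (smul_tmul _ _ _).symm
    have h2 : (∑ j, c j • a j : I) = 0 := by
      ext
      push_cast
      have := LinearMap.mem_ker.mp hcK
      rw [hΦapp] at this
      simpa using this
    calc (∑ j, a j ⊗ₜ[R] (c j • μ)) = ∑ j, (c j • a j) ⊗ₜ[R] μ := by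
          congr 1; ext j; exact h1 j
    _ = (∑ j, c j • a j : I) ⊗ₜ[R] μ := by rw [sum_tmul]
    _ = 0 := by rw [h2, zero_tmul]
  have : Ψ m = 0 := hkill hdia
  rw [hΨapp] at this
  exact this

/-- Evaluation at a point, as an additive map on the character module. -/
def evalAt {A : Type w} [AddCommGroup A] (a : A) :
    CharacterModule A →+ AddCircle (1 : ℚ) where
  toFun c := c a
  map_zero' := rfl
  map_add' _ _ := rfl

lemma charSum_apply {A : Type w} [AddCommGroup A] {ι : Type*} (s : Finset ι)
    (f : ι → CharacterModule A) (a : A) : (∑ i ∈ s, f i) a = ∑ i ∈ s, f i a :=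
  map_sum (evalAt a) f s

/-- The evaluation pairing `M ⊗ M⋆ → ℚ/ℤ`. -/
noncomputable def evalPairing : M ⊗[R] CharacterModule M →+ AddCircle (1 : ℚ) :=
  TensorProduct.liftAddHom
    { toFun := fun μ => evalAt μ
      map_zero' := by ext c; exact map_zero c
      map_add' := fun μ μ' => by ext c; exact map_add c μ μ' }
    (fun r μ c => (CharacterModule.smul_apply c r μ).symm)

@[simp] lemma evalPairing_tmul (μ : M) (c : CharacterModule M) :
    evalPairing (μ ⊗ₜ[R] c) = c μ :=
  TensorProduct.liftAddHom_tmul _ _ _ _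

/-- Universal torsionlessness (for modules in the universe of `M`) implies local
projectivity; proved by testing against the character module of `M`. -/
lemma isLP_of_UT
    (hUT : ∀ (N : Type v) [AddCommGroup N] [Module R N], Function.Injective (natMap R M N)) :
    IsLP R M := by
  intro t K m hK
  classical
  rw [← Submodule.Quotient.mk_eq_zero]
  apply CharacterModule.eq_zero_of_character_apply
  intro χ
  set n : Fin t → CharacterModule M := fun i =>
    χ.comp (((dia R M K).mkQ.comp (LinearMap.single R (fun _ : Fin t => M) i)).toAddMonoidHom)
    with hn
  have hnapp : ∀ i (ξ : M), n i ξ = χ (Submodule.Quotient.mk (Pi.single i ξ)) := fun i ξ => rfl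
  have hsum : ∀ ξ : Fin t → M, (∑ i, n i (ξ i)) = χ (Submodule.Quotient.mk ξ) := by
    intro ξ
    rw [show (∑ i, n i (ξ i)) = ∑ i, χ (Submodule.Quotient.mk (Pi.single i (ξ i))) from rfl,
      ← map_sum χ]
    congr 1
    rw [show (∑ i, (Submodule.Quotient.mk (Pi.single i (ξ i)) : (Fin t → M) ⧸ dia R M K))
        = Submodule.Quotient.mk (∑ i, Pi.single i (ξ i)) from (map_sum (dia R M K).mkQ _ _).symm]
    congr 1
    exact Finset.univ_sum_single ξ
  set x : M ⊗[R] CharacterModule M := ∑ i, m i ⊗ₜ n i with hx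
  have hxnat : natMap R M (CharacterModule M) x = 0 := by
    apply LinearMap.ext
    intro w
    rw [LinearMap.zero_apply, hx, natMap_sum]
    apply CharacterModule.ext
    intro μ
    rw [charSum_apply]
    have : ∀ i, (w (m i) • n i) μ = n i (w (m i) • μ) := fun i => rfl
    simp_rw [this, hnapp]
    rw [← map_sum χ]
    have hmem : (∑ i, Pi.single i (w (m i) • μ)) ∈ dia R M K := by
      rw [Finset.univ_sum_single (fun i => w (m i) • μ)]
      exact Submodule.subset_span ⟨fun i => w (m i), hK w, μ, rfl⟩
    rw [show (∑ i, (Submodule.Quotient.mk (Pi.single i (w (m i) • μ)) :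
          (Fin t → M) ⧸ dia R M K)) = Submodule.Quotient.mk (∑ i, Pi.single i (w (m i) • μ))
        from (map_sum (dia R M K).mkQ _ _).symm,
      show (Submodule.Quotient.mk (∑ i, Pi.single i (w (m i) • μ)) :
          (Fin t → M) ⧸ dia R M K) = 0 from (Submodule.Quotient.mk_eq_zero _).mpr hmem]
    rw [map_zero χ]
    rfl
  have hx0 : x = 0 := by
    apply hUT (CharacterModule M)
    rw [hxnat, map_zero]
  have := congrArg evalPairing hx0
  rw [hx, map_sum, map_zero] at this
  simp_rw [evalPairing_tmul] at this
  rw [hsum m] at this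
  exact this

/-- Universal torsionlessness implies the Mittag-Leffler condition. -/
lemma ml_of_UT
    (hUT : ∀ (N : Type v) [AddCommGroup N] [Module R N], Function.Injective (natMap R M N))
    (g : Type v) (Q : g → Type v) [∀ i, AddCommGroup (Q i)] [∀ i, Module R (Q i)] :
    Function.Injective (piRightHom R R M Q) := by
  rw [injective_iff_map_eq_zero]
  intro z hz
  apply hUT (∀ i, Q i)
  rw [map_zero]
  apply LinearMap.ext
  intro w
  rw [LinearMap.zero_apply]
  funext i
  have h1 : natMap R M (∀ j, Q j) z w i
      = (LinearMap.proj i : (∀ j, Q j) →ₗ[R] Q i) (natMap R M (∀ j, Q j) z w) := rfl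
  rw [h1, ← natMap_lTensor (LinearMap.proj i : (∀ j, Q j) →ₗ[R] Q i) z w,
    ← piRightHom_eq_lTensor_proj Q z i, hz]
  simp

lemma chain_common {N : Type w} [AddCommGroup N] [Module R N] {c : Set (Submodule R N)}
    (hc : IsChain (· ≤ ·) c) {y : Submodule R N} (hy : y ∈ c) (T : Finset N)
    (hT : ∀ p ∈ T, p ∈ sSup c) : ∃ P ∈ c, ∀ p ∈ T, p ∈ P := by
  classical
  induction T using Finset.induction_on with
  | empty => exact ⟨y, hy, by simp⟩
  | @insert a T haT ih =>
    obtain ⟨P, hPc, hPall⟩ := ih (fun p hp => hT p (Finset.mem_insert_of_mem hp))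
    have haSup : a ∈ sSup c := hT a (Finset.mem_insert_self a T)
    haveI : Nonempty ↥c := ⟨⟨y, hy⟩⟩
    rw [sSup_eq_iSup'] at haSup
    obtain ⟨⟨Q, hQc⟩, haQ⟩ := (Submodule.mem_iSup_of_directed _
      (directedOn_iff_directed.mp hc.directedOn)).mp haSup
    rcases hc.total hPc hQc with hPQ | hQP
    · refine ⟨Q, hQc, fun p hp => ?_⟩
      rcases Finset.mem_insert.mp hp with rfl | hp
      · exact haQ
      · exact hPQ (hPall p hp)
    · refine ⟨P, hPc, fun p hp => ?_⟩
      rcases Finset.mem_insert.mp hp with rfl | hp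
      · exact hQP haQ
      · exact hPall p hp

/-- The hard direction: a flat Mittag-Leffler module whose `natMap` into all residue fields
at maximal ideals is injective is universally torsionless (for modules in the universe of
`M`). The proof is by a Zorn's lemma argument producing a subdirectly irreducible quotient,
whose monolith is annihilated by a maximal ideal. -/
lemma backward
    (hFlat : Module.Flat R M)
    (hML : ∀ (g : Type v) (Q : g → Type v) [∀ i, AddCommGroup (Q i)] [∀ i, Module R (Q i)],
      Function.Injective (TensorProduct.piRightHom R R M Q))
    (hRes : ∀ I : Ideal R, I.IsMaximal → Function.Injective (natMap R M (R ⧸ I)))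
    (N : Type v) [AddCommGroup N] [Module R N] :
    Function.Injective (natMap R M N) := by
  rw [injective_iff_map_eq_zero]
  intro x hx
  by_contra hx0
  classical
  set s : Set (Submodule R N) := {P | LinearMap.lTensor M P.mkQ x ≠ 0} with hs
  have hbot : (⊥ : Submodule R N) ∈ s := by
    intro h0
    apply hx0
    have hinj : Function.Injective ((⊥ : Submodule R N).mkQ) := by
      rw [← LinearMap.ker_eq_bot, Submodule.ker_mkQ]
    apply Module.Flat.lTensor_preserves_injective_linearMap (M := M) _ hinj
    rw [h0, map_zero]
  have hchain : ∀ c ⊆ s, IsChain (· ≤ ·) c → ∀ y ∈ c, ∃ ub ∈ s, ∀ z ∈ c, z ≤ ub := by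
    intro c hcs hc y hy
    refine ⟨sSup c, ?_, fun z hz => le_sSup hz⟩
    intro hsup
    have hxr : x ∈ LinearMap.range (LinearMap.lTensor M (sSup c).subtype) := by
      rw [← lTensor_mkQ]
      exact hsup
    obtain ⟨y', hy'⟩ := hxr
    obtain ⟨S, hS⟩ := TensorProduct.exists_finset y'
    obtain ⟨P, hPc, hPall⟩ := chain_common hc hy (S.image (fun p => ((p.2 : ↥(sSup c)) : N)))
      (by
        intro q hq
        obtain ⟨p, _, rfl⟩ := Finset.mem_image.mp hq
        exact (p.2 : ↥(sSup c)).2)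
    have hmem : ∀ p ∈ S, ((p.2 : ↥(sSup c)) : N) ∈ P := fun p hp =>
      hPall _ (Finset.mem_image_of_mem _ hp)
    set y'' : M ⊗[R] ↥P :=
      ∑ p ∈ S.attach, (p : M × ↥(sSup c)).1 ⊗ₜ[R]
        (⟨((p : M × ↥(sSup c)).2 : N), hmem p.1 p.2⟩ : ↥P) with hy''
    have hxP : LinearMap.lTensor M P.subtype y'' = x := by
      rw [← hy', hS, hy'', map_sum, map_sum]
      rw [← Finset.sum_attach S (fun p => LinearMap.lTensor M (sSup c).subtype
        (p.1 ⊗ₜ[R] p.2))]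
      exact Finset.sum_congr rfl (fun p _ => by simp)
    have : LinearMap.lTensor M P.mkQ x = 0 := by
      rw [← hxP, ← LinearMap.lTensor_comp_apply]
      have hcomp : P.mkQ ∘ₗ P.subtype = 0 := by
        ext p
        simp [Submodule.Quotient.mk_eq_zero]
      rw [hcomp, LinearMap.lTensor_zero, LinearMap.zero_apply]
    exact (hcs hPc) this
  obtain ⟨P, -, hPmax⟩ := zorn_le_nonempty₀ s hchain ⊥ hbot
  have hPs : LinearMap.lTensor M P.mkQ x ≠ 0 := hPmax.1
  have key : ∀ X : Submodule R (N ⧸ P), X ≠ ⊥ →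
      LinearMap.lTensor M X.mkQ (LinearMap.lTensor M P.mkQ x) = 0 := by
    intro X hX
    set P' := X.comap P.mkQ with hP'
    have hle : P ≤ P' := by
      intro p hp
      show P.mkQ p ∈ X
      rw [Submodule.mkQ_apply, (Submodule.Quotient.mk_eq_zero P).mpr hp]
      exact X.zero_mem
    have hlt : P < P' := by
      obtain ⟨ξ, hξX, hξ0⟩ := (Submodule.ne_bot_iff X).mp hX
      obtain ⟨nn, rfl⟩ := Submodule.mkQ_surjective P ξ
      refine lt_of_le_of_ne hle (fun hEq => hξ0 ?_)
      have hnP' : nn ∈ P' := hξX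
      rw [← hEq] at hnP'
      rw [Submodule.mkQ_apply]
      exact (Submodule.Quotient.mk_eq_zero P).mpr hnP'
    have hP'0 : LinearMap.lTensor M P'.mkQ x = 0 := by
      by_contra hne
      exact hlt.not_ge (hPmax.2 hne hlt.le)
    have hker : P' ≤ LinearMap.ker (X.mkQ ∘ₗ P.mkQ) := by
      intro p hp
      rw [LinearMap.mem_ker, LinearMap.comp_apply, Submodule.mkQ_apply,
        Submodule.mkQ_apply, Submodule.Quotient.mk_eq_zero]
      exact hp
    have hψ : (P'.liftQ (X.mkQ ∘ₗ P.mkQ) hker) ∘ₗ P'.mkQ = X.mkQ ∘ₗ P.mkQ :=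
      Submodule.liftQ_mkQ _ _ _
    calc LinearMap.lTensor M X.mkQ (LinearMap.lTensor M P.mkQ x)
        = LinearMap.lTensor M (X.mkQ ∘ₗ P.mkQ) x := by rw [LinearMap.lTensor_comp_apply]
      _ = LinearMap.lTensor M ((P'.liftQ (X.mkQ ∘ₗ P.mkQ) hker) ∘ₗ P'.mkQ) x := by rw [hψ]
      _ = LinearMap.lTensor M (P'.liftQ (X.mkQ ∘ₗ P.mkQ) hker)
            (LinearMap.lTensor M P'.mkQ x) := by rw [LinearMap.lTensor_comp_apply]
      _ = 0 := by rw [hP'0, map_zero]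
  by_cases hSbot : sInf {X : Submodule R (N ⧸ P) | X ≠ ⊥} = ⊥
  · set δ : (N ⧸ P) →ₗ[R] (∀ X : ↥{X : Submodule R (N ⧸ P) | X ≠ ⊥}, (N ⧸ P) ⧸ X.1) :=
      LinearMap.pi (fun X => X.1.mkQ) with hδ
    have hδinj : Function.Injective δ := by
      rw [← LinearMap.ker_eq_bot, hδ, LinearMap.ker_pi]
      have h1 : (⨅ X : ↥{X : Submodule R (N ⧸ P) | X ≠ ⊥}, LinearMap.ker X.1.mkQ)
          = ⨅ X : ↥{X : Submodule R (N ⧸ P) | X ≠ ⊥}, X.1 := by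
        congr 1
        funext X
        exact Submodule.ker_mkQ X.1
      rw [h1, ← sInf_eq_iInf']
      exact hSbot
    have hpi0 : piRightHom R R M (fun X : ↥{X : Submodule R (N ⧸ P) | X ≠ ⊥} => (N ⧸ P) ⧸ X.1)
        (LinearMap.lTensor M δ (LinearMap.lTensor M P.mkQ x)) = 0 := by
      funext X
      rw [piRightHom_eq_lTensor_proj, ← LinearMap.lTensor_comp_apply]
      have : (LinearMap.proj X : (∀ Y : ↥{X : Submodule R (N ⧸ P) | X ≠ ⊥}, (N ⧸ P) ⧸ Y.1)
          →ₗ[R] (N ⧸ P) ⧸ X.1) ∘ₗ δ = X.1.mkQ := LinearMap.proj_pi _ _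
      rw [this, key X.1 X.2]
      rfl
    have hδ0 : LinearMap.lTensor M δ (LinearMap.lTensor M P.mkQ x) = 0 := by
      apply hML ↥{X : Submodule R (N ⧸ P) | X ≠ ⊥}
        (fun X => (N ⧸ P) ⧸ X.1)
      rw [hpi0, map_zero]
    exact hPs (Module.Flat.lTensor_preserves_injective_linearMap (M := M) δ hδinj
      (by rw [hδ0, map_zero]))
  · obtain ⟨s₀, hs₀S, hs₀ne⟩ := (Submodule.ne_bot_iff _).mp hSbot
    have hmono : ∀ X : Submodule R (N ⧸ P), X ≠ ⊥ → s₀ ∈ X := fun X hX =>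
      (sInf_le (show X ∈ {X : Submodule R (N ⧸ P) | X ≠ ⊥} from hX)) hs₀S
    set 𝔪 : Ideal R := LinearMap.ker (LinearMap.toSpanSingleton R (N ⧸ P) s₀) with h𝔪
    have hsmul : ∀ r : R, r ∈ 𝔪 ↔ r • s₀ = 0 := by
      intro r
      rw [h𝔪, LinearMap.mem_ker, LinearMap.toSpanSingleton_apply]
    have hmax : 𝔪.IsMaximal := by
      rw [Ideal.isMaximal_iff]
      constructor
      · intro h1
        rw [hsmul, one_smul] at h1
        exact hs₀ne h1
      · intro J r hJ hr𝔪 hrJ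
        have hrs : r • s₀ ≠ 0 := fun h => hr𝔪 ((hsmul r).mpr h)
        have hsp : s₀ ∈ Submodule.span R {r • s₀} :=
          hmono _ (by rwa [Ne, Submodule.span_singleton_eq_bot])
        obtain ⟨c, hc⟩ := Submodule.mem_span_singleton.mp hsp
        have h1 : (1 - c * r) ∈ 𝔪 := by
          rw [hsmul, sub_smul, one_smul, mul_smul, hc, sub_self]
        have h2 : (1 : R) = (1 - c * r) + c * r := by ring
        rw [h2]
        exact J.add_mem (hJ h1) (J.mul_mem_left c hrJ)
    have hspan0 : LinearMap.lTensor M (Submodule.span R {s₀}).mkQ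
        (LinearMap.lTensor M P.mkQ x) = 0 :=
      key _ (by rwa [Ne, Submodule.span_singleton_eq_bot])
    have hxr : LinearMap.lTensor M P.mkQ x ∈
        LinearMap.range (LinearMap.lTensor M (Submodule.span R {s₀}).subtype) := by
      rw [← lTensor_mkQ]
      exact hspan0
    obtain ⟨y', hy'⟩ := hxr
    have hcyc : ∀ y : M ⊗[R] ↥(Submodule.span R {s₀}), ∃ μ₀ : M, y = μ₀ ⊗ₜ[R]
        (⟨s₀, Submodule.mem_span_singleton_self s₀⟩ : ↥(Submodule.span R {s₀})) := by
      intro y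
      induction y using TensorProduct.induction_on with
      | zero => exact ⟨0, (TensorProduct.zero_tmul _ _).symm⟩
      | tmul μ p =>
        obtain ⟨r, hr⟩ := Submodule.mem_span_singleton.mp p.2
        refine ⟨r • μ, ?_⟩
        have hp : p = r • (⟨s₀, Submodule.mem_span_singleton_self s₀⟩ :
            ↥(Submodule.span R {s₀})) := Subtype.ext (by simpa using hr.symm)
        rw [hp]
        exact (smul_tmul _ _ _).symm
      | add a b ha hb =>
        obtain ⟨μa, rfl⟩ := ha
        obtain ⟨μb, rfl⟩ := hb
        exact ⟨μa + μb, (TensorProduct.add_tmul _ _ _).symm⟩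
    obtain ⟨μ₀, rfl⟩ := hcyc y'
    have hxeq : LinearMap.lTensor M P.mkQ x = μ₀ ⊗ₜ[R] s₀ := by
      rw [← hy']
      simp
    have hw : ∀ w : M →ₗ[R] R, w μ₀ ∈ 𝔪 := by
      intro w
      rw [hsmul]
      have h1 : natMap R M (N ⧸ P) (LinearMap.lTensor M P.mkQ x) w
          = P.mkQ (natMap R M N x w) := natMap_lTensor _ _ _
      rw [hxeq, natMap_tmul, hx] at h1
      simpa using h1
    have hz : natMap R M (R ⧸ 𝔪) (μ₀ ⊗ₜ[R] (Ideal.Quotient.mk 𝔪 1)) = 0 := by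
      apply LinearMap.ext
      intro w
      rw [natMap_tmul, LinearMap.zero_apply,
        show (Ideal.Quotient.mk 𝔪 1 : R ⧸ 𝔪) = Submodule.Quotient.mk 1 from rfl,
        ← Submodule.Quotient.mk_smul, smul_eq_mul, mul_one, Submodule.Quotient.mk_eq_zero]
      exact hw w
    have hz0 : μ₀ ⊗ₜ[R] (Ideal.Quotient.mk 𝔪 1) = (0 : M ⊗[R] (R ⧸ 𝔪)) := by
      apply hRes 𝔪 hmax
      rw [hz, map_zero]
    have hμ₀ : μ₀ ∈ (𝔪 • ⊤ : Submodule R M) := by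
      have h2 := congrArg (tensorQuotEquivQuotSMul M 𝔪) hz0
      rw [map_zero] at h2
      have h3 : tensorQuotEquivQuotSMul M 𝔪 (μ₀ ⊗ₜ[R] (Ideal.Quotient.mk 𝔪 1))
          = Submodule.Quotient.mk μ₀ := by
        rw [tensorQuotEquivQuotSMul, LinearEquiv.trans_apply, TensorProduct.comm_tmul,
          quotTensorEquivQuotSMul_mk_tmul, one_smul]
      rw [h3] at h2
      exact (Submodule.Quotient.mk_eq_zero _).mp h2
    have hfin : μ₀ ⊗ₜ[R] s₀ = (0 : M ⊗[R] (N ⧸ P)) := by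
      refine Submodule.smul_induction_on (p := fun μ => μ ⊗ₜ[R] s₀ = (0 : M ⊗[R] (N ⧸ P)))
        hμ₀ ?_ ?_
      · intro r hr ν _
        rw [smul_tmul, (hsmul r).mp hr, tmul_zero]
      · intro a b ha hb
        rw [TensorProduct.add_tmul, ha, hb, add_zero]
    exact hPs (hxeq.trans hfin)

end Aux

theorem stmt16 (R : Type u) [CommRing R] (M : Type v) [AddCommGroup M] [Module R M] :
    (∀ (N : Type v) [AddCommGroup N] [Module R N], Function.Injective (natMap R M N)) ↔
      (Module.Flat R M ∧
        (∀ (g : Type v) (Q : g → Type v) [∀ i, AddCommGroup (Q i)] [∀ i, Module R (Q i)],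
          Function.Injective (TensorProduct.piRightHom R R M Q)) ∧
        ∀ (I : Ideal R), I.IsMaximal → Function.Injective (natMap R M (R ⧸ I))) := by
  constructor
  · intro hUT
    have hLP := isLP_of_UT hUT
    exact ⟨flat_of_isLP hLP, ml_of_UT hUT, fun I _ => injective_natMap_of_isLP hLP⟩
  · rintro ⟨hFlat, hML, hRes⟩
    intro N _ _
    exact backward hFlat hML hRes N
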